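/- Let {z_n} be a sequence in the open unit disk with z_n ≠ 0 for all n, and suppose (1 - |z_n|)/(1 - |z_{n-1}|) = c_n where c_n > 0 and c_n → 0. Then {z_n} is a thin Blaschke sequence: lim_{k→∞} ∏_{j ≠ k} d(z_k, z_j) = 1. -/

import Mathlib

open Metric Filter Topology

/-- The pseudohyperbolic distance on the unit disk. -/
noncomputable def pd (z w : ℂ) : ℝ := ‖(z - w) / (1 - (starRingEnd ℂ) w * z)‖

private lemma normSq_key (z w : ℂ) :
    Complex.normSq (1 - (starRingEnd ℂ) w * z) - Complex.normSq (z - w)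
      = (1 - Complex.normSq z) * (1 - Complex.normSq w) := by
  simp only [Complex.normSq_apply, Complex.sub_re, Complex.sub_im, Complex.mul_re,
    Complex.mul_im, Complex.one_re, Complex.one_im, Complex.conj_re, Complex.conj_im]
  ring

private lemma pd_basic (z w : ℂ) (hz : ‖z‖ < 1) (hw : ‖w‖ < 1) :
    (1 - pd z w ^ 2) * ‖1 - (starRingEnd ℂ) w * z‖ ^ 2
      = (1 - ‖z‖ ^ 2) * (1 - ‖w‖ ^ 2)
    ∧ max (1 - ‖z‖) (1 - ‖w‖) ≤ ‖1 - (starRingEnd ℂ) w * z‖ := by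
  have hx0 : 0 ≤ ‖z‖ := norm_nonneg z
  have hy0 : 0 ≤ ‖w‖ := norm_nonneg w
  have hD1 : 1 - ‖w‖ * ‖z‖ ≤ ‖1 - (starRingEnd ℂ) w * z‖ := by
    have h := norm_sub_norm_le (1 : ℂ) ((starRingEnd ℂ) w * z)
    simpa [norm_mul, Complex.norm_conj] using h
  have hD0 : (0:ℝ) < ‖1 - (starRingEnd ℂ) w * z‖ := by nlinarith
  constructor
  · have h1 : pd z w ^ 2 * ‖1 - (starRingEnd ℂ) w * z‖ ^ 2
        = Complex.normSq (z - w) := by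
      rw [pd, norm_div, div_pow, div_mul_cancel₀ _ (by positivity), Complex.sq_norm]
    calc (1 - pd z w ^ 2) * ‖1 - (starRingEnd ℂ) w * z‖ ^ 2
        = ‖1 - (starRingEnd ℂ) w * z‖ ^ 2
          - pd z w ^ 2 * ‖1 - (starRingEnd ℂ) w * z‖ ^ 2 := by ring
      _ = Complex.normSq (1 - (starRingEnd ℂ) w * z) - Complex.normSq (z - w) := by
          rw [h1, Complex.sq_norm]
      _ = (1 - Complex.normSq z) * (1 - Complex.normSq w) := normSq_key z w
      _ = (1 - ‖z‖ ^ 2) * (1 - ‖w‖ ^ 2) := by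
          rw [Complex.sq_norm, Complex.sq_norm]
  · have h1 : 1 - ‖z‖ ≤ 1 - ‖w‖ * ‖z‖ := by nlinarith
    have h2 : 1 - ‖w‖ ≤ 1 - ‖w‖ * ‖z‖ := by nlinarith
    exact max_le (h1.trans hD1) (h2.trans hD1)

private lemma pd_le_one (z w : ℂ) (hz : ‖z‖ < 1) (hw : ‖w‖ < 1) :
    pd z w ≤ 1 := by
  obtain ⟨h1, h2⟩ := pd_basic z w hz hw
  have hp : 0 ≤ pd z w := norm_nonneg _
  have hm : (0:ℝ) < max (1 - ‖z‖) (1 - ‖w‖) :=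
    lt_max_of_lt_left (by linarith)
  have hD : (0:ℝ) < ‖1 - (starRingEnd ℂ) w * z‖ := lt_of_lt_of_le hm h2
  have hx0 : 0 ≤ ‖z‖ := norm_nonneg z
  have hy0 : 0 ≤ ‖w‖ := norm_nonneg w
  have hx2 : ‖z‖ ^ 2 < 1 := by nlinarith
  have hy2 : ‖w‖ ^ 2 < 1 := by nlinarith
  have hpos : (0:ℝ) < (1 - ‖z‖ ^ 2) * (1 - ‖w‖ ^ 2) :=
    mul_pos (by linarith) (by linarith)
  have hq : (0:ℝ) < (1 - pd z w ^ 2) * ‖1 - (starRingEnd ℂ) w * z‖ ^ 2 :=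
    h1 ▸ hpos
  have hD2 : (0:ℝ) < ‖1 - (starRingEnd ℂ) w * z‖ ^ 2 := by positivity
  have hpd2 : 0 < 1 - pd z w ^ 2 := by
    by_contra h
    push_neg at h
    nlinarith
  nlinarith

private lemma pd_ge (z w : ℂ) (hz : ‖z‖ < 1) (hw : ‖w‖ < 1) (t : ℝ)
    (ht : 4 * ((1 - ‖z‖) * (1 - ‖w‖))
        ≤ t * max (1 - ‖z‖) (1 - ‖w‖) ^ 2) :
    1 - t ≤ pd z w := by
  obtain ⟨h1, h2⟩ := pd_basic z w hz hw
  have hp : 0 ≤ pd z w := norm_nonneg _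
  have hp1 : pd z w ≤ 1 := pd_le_one z w hz hw
  have hm : (0:ℝ) < max (1 - ‖z‖) (1 - ‖w‖) :=
    lt_max_of_lt_left (by linarith)
  have hx0 : 0 ≤ ‖z‖ := norm_nonneg z
  have hy0 : 0 ≤ ‖w‖ := norm_nonneg w
  have hsq : max (1 - ‖z‖) (1 - ‖w‖) ^ 2
      ≤ ‖1 - (starRingEnd ℂ) w * z‖ ^ 2 := by nlinarith
  have hpd1 : 0 ≤ 1 - pd z w ^ 2 := by nlinarith
  have hub : (1 - ‖z‖ ^ 2) * (1 - ‖w‖ ^ 2)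
      ≤ 4 * ((1 - ‖z‖) * (1 - ‖w‖)) := by
    have e : (1 - ‖z‖ ^ 2) * (1 - ‖w‖ ^ 2)
        = ((1 - ‖z‖) * (1 - ‖w‖))
          * ((1 + ‖z‖) * (1 + ‖w‖)) := by ring
    have e2 : (1 + ‖z‖) * (1 + ‖w‖) ≤ 4 := by nlinarith
    have e3 : (0:ℝ) ≤ (1 - ‖z‖) * (1 - ‖w‖) := by nlinarith
    nlinarith
  have key : (1 - pd z w ^ 2) * max (1 - ‖z‖) (1 - ‖w‖) ^ 2
      ≤ t * max (1 - ‖z‖) (1 - ‖w‖) ^ 2 := by nlinarith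
  have h5 : 1 - pd z w ^ 2 ≤ t := le_of_mul_le_mul_right key (pow_pos hm 2)
  nlinarith

private lemma tprod_bounds (f g : ℕ → ℝ) (S : ℝ)
    (hf0 : ∀ j, 0 ≤ f j) (hf1 : ∀ j, f j ≤ 1)
    (hg0 : ∀ j, 0 ≤ g j) (hfg : ∀ j, 1 - g j ≤ f j)
    (hS : ∀ F : Finset ℕ, ∑ j ∈ F, g j ≤ S) :
    1 - S ≤ ∏' j, f j ∧ ∏' j, f j ≤ 1 := by
  have hS0 : 0 ≤ S := by simpa using hS ∅
  have key : ∀ F : Finset ℕ, 1 - ∑ j ∈ F, g j ≤ ∏ j ∈ F, f j := by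
    intro F
    induction F using Finset.induction_on with
    | empty => simp
    | @insert a F' hj ih =>
      rw [Finset.sum_insert hj, Finset.prod_insert hj]
      rcases le_or_gt (1 - ∑ j ∈ F', g j) 0 with h | h
      · have : (0:ℝ) ≤ ∏ j ∈ F', f j := Finset.prod_nonneg fun j _ => hf0 j
        nlinarith [hg0 a, hfg a, hf0 a]
      · have h1 : f a * (1 - ∑ j ∈ F', g j) ≤ f a * ∏ j ∈ F', f j :=
          mul_le_mul_of_nonneg_left ih (hf0 a)
        have h2 : (1 - g a) * (1 - ∑ j ∈ F', g j) ≤ f a * (1 - ∑ j ∈ F', g j) :=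
          mul_le_mul_of_nonneg_right (hfg a) h.le
        have h3 : 0 ≤ g a * ∑ j ∈ F', g j :=
          mul_nonneg (hg0 a) (Finset.sum_nonneg fun j _ => hg0 j)
        nlinarith
  by_cases hM : Multipliable f
  · have hP := hM.hasProd
    constructor
    · refine ge_of_tendsto hP (Eventually.of_forall fun F => ?_)
      have := key F
      have := hS F
      linarith
    · exact le_of_tendsto hP (Eventually.of_forall fun F =>
        Finset.prod_le_one (fun j _ => hf0 j) (fun j _ => hf1 j))
  · rw [tprod_eq_one_of_not_multipliable hM]
    exact ⟨by linarith, le_refl 1⟩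

theorem thin_of_ratio_tendsto_zero
    (z : ℕ → ℂ) (hz : ∀ n, z n ∈ ball (0:ℂ) 1) (hz0 : ∀ n, z n ≠ 0)
    (c : ℕ → ℝ) (hc : ∀ n, 0 < c n) (hc0 : Tendsto c atTop (𝓝 0))
    (hrat : ∀ n, (1 - ‖z (n+1)‖) / (1 - ‖z n‖) = c (n+1)) :
    Tendsto (fun k => ∏' j : ℕ, if j = k then 1 else pd (z k) (z j))
      atTop (𝓝 1) := by
  have haz : ∀ n, ‖z n‖ < 1 := by
    intro n
    have := mem_ball_zero_iff.mp (hz n)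
    exact this
  set a : ℕ → ℝ := fun n => 1 - ‖z n‖ with ha
  have ea : ∀ n, 1 - ‖z n‖ = a n := fun n => rfl
  have ha_pos : ∀ n, 0 < a n := fun n => by rw [← ea]; linarith [haz n]
  have ha_le1 : ∀ n, a n ≤ 1 := fun n => by rw [← ea]; linarith [norm_nonneg (z n)]
  have harec : ∀ n, a (n + 1) = c (n + 1) * a n := by
    intro n
    have h := hrat n
    rw [div_eq_iff (by rw [ea]; exact (ha_pos n).ne')] at h
    rw [← ea, ← ea, h]
  have ha0 : Tendsto a atTop (𝓝 0) := by
    apply squeeze_zero' (Eventually.of_forall fun n => (ha_pos n).le) _ hc0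
    filter_upwards [eventually_ge_atTop 1] with n hn
    obtain ⟨j, rfl⟩ : ∃ j, n = j + 1 := ⟨n - 1, by omega⟩
    calc a (j+1) = c (j+1) * a j := harec j
    _ ≤ c (j+1) * 1 := mul_le_mul_of_nonneg_left (ha_le1 j) (hc (j+1)).le
    _ = c (j+1) := mul_one _
  rw [Metric.tendsto_atTop]
  intro δ hδ
  set ε := min (δ/18) (1/2) with hεdef
  have hε0 : 0 < ε := lt_min (by linarith) one_half_pos
  have hε2 : ε ≤ 1/2 := min_le_right _ _
  have hε1 : ε < 1 := lt_of_le_of_lt hε2 (by norm_num)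
  have hεδ : 17 * ε < δ := by
    have h := min_le_left (δ/18) (1/2)
    rw [← hεdef] at h
    linarith
  obtain ⟨N, hN⟩ : ∃ N, ∀ n, N ≤ n → c n ≤ ε := by
    obtain ⟨N, hN⟩ := (Metric.tendsto_atTop.mp hc0) ε hε0
    refine ⟨N, fun n hn => ?_⟩
    have := hN n hn
    rw [Real.dist_eq, sub_zero] at this
    exact (le_abs_self _).trans this.le
  set m := (Finset.range (N+1)).inf' ⟨0, by simp⟩ a with hmdef
  have hm0 : 0 < m := by
    rw [hmdef]; refine (Finset.lt_inf'_iff _).mpr ?_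
    exact fun j _ => ha_pos j
  have hmle : ∀ j, j < N → m ≤ a j := fun j hj =>
    Finset.inf'_le a (Finset.mem_range.mpr (by omega))
  have H1 : ∀ k, N ≤ k → ∀ i, a (k + i) ≤ ε ^ i * a k := by
    intro k hk i
    induction i with
    | zero => simp
    | succ i ih =>
      have h1 : a (k + i + 1) = c (k + i + 1) * a (k + i) := harec _
      have h2 : c (k + i + 1) ≤ ε := hN _ (by omega)
      have h3 : 0 < c (k + i + 1) := hc _
      have h4 : 0 < a (k + i) := ha_pos _
      calc a (k + (i+1)) = c (k+i+1) * a (k+i) := h1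
      _ ≤ ε * (ε ^ i * a k) := by nlinarith [pow_nonneg hε0.le i, ha_pos k]
      _ = ε ^ (i+1) * a k := by ring
  obtain ⟨N₂, hN₂⟩ : ∃ N₂, ∀ k, N₂ ≤ k → 4 * (N:ℝ) * a k / m ≤ ε := by
    obtain ⟨N₂, h⟩ := (Metric.tendsto_atTop.mp ha0) (ε * m / (4 * N + 1))
      (div_pos (mul_pos hε0 hm0) (by positivity))
    refine ⟨N₂, fun k hk => ?_⟩
    have hk1 := h k hk
    rw [Real.dist_eq, sub_zero] at hk1
    have hk2 : a k < ε * m / (4*N+1) := lt_of_abs_lt hk1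
    rw [div_le_iff₀ hm0]
    have h4N : (0:ℝ) ≤ 4 * N := by positivity
    have h5 : (4*(N:ℝ)) * a k ≤ (4*N) * (ε*m/(4*N+1)) := mul_le_mul_of_nonneg_left hk2.le h4N
    have h6 : (4*(N:ℝ)) * (ε*m/(4*N+1)) ≤ ε * m := by
      rw [mul_div_assoc', div_le_iff₀ (show (0:ℝ) < 4*N+1 by positivity)]
      nlinarith [mul_nonneg hε0.le hm0.le]
    exact h5.trans h6
  refine ⟨max N₂ N, fun k hk => ?_⟩
  have hkN₂ : N₂ ≤ k := le_trans (le_max_left _ _) hk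
  have hkN : N ≤ k := le_trans (le_max_right _ _) hk
  set f : ℕ → ℝ := fun j => if j = k then 1 else pd (z k) (z j) with hfdef
  set g : ℕ → ℝ := fun j => if j = k then 0 else
      if j < N then 4 * a k / m else if j < k then 4 * ε ^ (k - j) else 4 * ε ^ (j - k) with hgdef
  have hf0 : ∀ j, 0 ≤ f j := by
    intro j; rw [hfdef]; dsimp only; split_ifs
    · norm_num
    · exact norm_nonneg _
  have hf1 : ∀ j, f j ≤ 1 := by
    intro j; rw [hfdef]; dsimp only; split_ifs
    · exact le_refl 1
    · exact pd_le_one _ _ (haz k) (haz j)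
  have epow : ∀ p : ℕ, (0:ℝ) ≤ 4 * ε ^ p :=
    fun p => mul_nonneg (by norm_num) (pow_nonneg hε0.le p)
  have hC0 : (0:ℝ) ≤ 4 * a k / m :=
    div_nonneg (by nlinarith [ha_pos k]) hm0.le
  have hg0 : ∀ j, 0 ≤ g j := by
    intro j; rw [hgdef]; dsimp only
    split_ifs <;> linarith [epow (k-j), epow (j-k), hC0]
  have hfg : ∀ j, 1 - g j ≤ f j := by
    intro j
    rw [hfdef, hgdef]; dsimp only
    by_cases hjk : j = k
    · rw [if_pos hjk, if_pos hjk]; norm_num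
    rw [if_neg hjk, if_neg hjk]
    by_cases hjN : j < N
    · rw [if_pos hjN]
      apply pd_ge _ _ (haz k) (haz j)
      rw [ea k, ea j]
      have h1 : m ≤ a j := hmle j hjN
      have h2 : a j ≤ max (a k) (a j) := le_max_right _ _
      have h3 : m ≤ max (a k) (a j) := h1.trans h2
      rw [div_mul_eq_mul_div, le_div_iff₀ hm0]
      have h4 : a j * m ≤ max (a k) (a j) * max (a k) (a j) :=
        mul_le_mul h2 h3 hm0.le (le_trans (ha_pos k).le (le_max_left _ _))
      nlinarith [ha_pos k]
    rw [if_neg hjN]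
    push_neg at hjN
    rcases lt_or_gt_of_ne hjk with hlt | hgt
    · rw [if_pos hlt]
      apply pd_ge _ _ (haz k) (haz j)
      rw [ea k, ea j]
      have hup : a k ≤ ε^(k-j) * a j := by
        have h := H1 j hjN (k - j)
        rwa [show j + (k-j) = k from by omega] at h
      have h5 : a k * a j ≤ ε^(k-j) * a j * a j :=
        mul_le_mul_of_nonneg_right hup (ha_pos j).le
      have h6 : a j * a j ≤ max (a k) (a j) * max (a k) (a j) :=
        mul_self_le_mul_self (ha_pos j).le (le_max_right _ _)
      nlinarith [pow_nonneg hε0.le (k-j)]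
    · rw [if_neg (by omega : ¬ j < k)]
      apply pd_ge _ _ (haz k) (haz j)
      rw [ea k, ea j]
      have hup : a j ≤ ε^(j-k) * a k := by
        have h := H1 k hkN (j - k)
        rwa [show k + (j-k) = j from by omega] at h
      have h5 : a j * a k ≤ ε^(j-k) * a k * a k :=
        mul_le_mul_of_nonneg_right hup (ha_pos k).le
      have h6 : a k * a k ≤ max (a k) (a j) * max (a k) (a j) :=
        mul_self_le_mul_self (ha_pos k).le (le_max_left _ _)
      nlinarith [pow_nonneg hε0.le (j-k)]
  have hgeom : ∀ L : ℕ, ∑ i ∈ Finset.range L, 4 * ε^(i+1) ≤ 8 * ε := by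
    intro L
    have h1 : ∑ i ∈ Finset.range L, ε^i ≤ (1-ε)⁻¹ := by
      have h := Summable.sum_le_tsum (Finset.range L) (fun i _ => pow_nonneg hε0.le i)
        (summable_geometric_of_lt_one hε0.le hε1)
      rwa [tsum_geometric_of_lt_one hε0.le hε1] at h
    have e : ∑ i ∈ Finset.range L, 4*ε^(i+1) = 4*ε * ∑ i ∈ Finset.range L, ε^i := by
      rw [Finset.mul_sum]
      exact Finset.sum_congr rfl fun i _ => by ring
    have h2 : (1-ε)⁻¹ ≤ 2 := by
      rw [show (2:ℝ) = (1/2:ℝ)⁻¹ by norm_num]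
      exact inv_anti₀ (by norm_num) (by linarith)
    calc ∑ i ∈ Finset.range L, 4*ε^(i+1) = 4*ε * ∑ i ∈ Finset.range L, ε^i := e
    _ ≤ 4*ε * (1-ε)⁻¹ := mul_le_mul_of_nonneg_left h1 (by linarith)
    _ ≤ 4*ε*2 := mul_le_mul_of_nonneg_left h2 (by linarith)
    _ = 8*ε := by ring
  have hSum : ∀ F : Finset ℕ, ∑ j ∈ F, g j ≤ 17 * ε := by
    intro F
    set M := (F.sup id) + k + N + 2 with hM
    have hMk : k + 1 ≤ M := by rw [hM]; omega
    have hMs : F.sup id + 1 ≤ M := by rw [hM]; omega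
    have hFM : F ⊆ Finset.range M := by
      intro j hj
      have h : id j ≤ F.sup id := Finset.le_sup (f := id) hj
      simp only [id] at h
      exact Finset.mem_range.mpr (by omega)
    have step1 : ∑ j ∈ F, g j ≤ ∑ j ∈ Finset.range M, g j :=
      Finset.sum_le_sum_of_subset_of_nonneg hFM (fun j _ _ => hg0 j)
    have hpoint : ∀ j, g j ≤ (if j < N then 4*a k/m else 0)
        + (if j < k then 4*ε^(k-j) else 0) + (if k < j then 4*ε^(j-k) else 0) := by
      intro j
      rw [hgdef]; dsimp only
      split_ifs <;> first | (exfalso; omega) | linarith [epow (k-j), epow (j-k), hC0]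
    have step2 : ∑ j ∈ Finset.range M, g j
        ≤ (∑ j ∈ Finset.range M, (if j < N then 4*a k/m else 0))
          + (∑ j ∈ Finset.range M, (if j < k then 4*ε^(k-j) else 0))
          + (∑ j ∈ Finset.range M, (if k < j then 4*ε^(j-k) else 0)) := by
      rw [← Finset.sum_add_distrib, ← Finset.sum_add_distrib]
      exact Finset.sum_le_sum fun j _ => hpoint j
    have s1 : ∑ j ∈ Finset.range M, (if j < N then 4*a k/m else 0) ≤ ε := by
      rw [← Finset.sum_filter, Finset.sum_const, nsmul_eq_mul]
      have hcard : ((Finset.range M).filter (· < N)).card ≤ N := by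
        have hsub : (Finset.range M).filter (· < N) ⊆ Finset.range N := by
          intro j hj
          simp only [Finset.mem_filter, Finset.mem_range] at hj ⊢
          exact hj.2
        calc _ ≤ (Finset.range N).card := Finset.card_le_card hsub
        _ = N := Finset.card_range N
      calc (((Finset.range M).filter (· < N)).card : ℝ) * (4*a k/m)
          ≤ (N:ℝ) * (4*a k/m) := by
            exact mul_le_mul_of_nonneg_right (Nat.cast_le.mpr hcard) hC0
      _ = 4 * (N:ℝ) * a k / m := by ring
      _ ≤ ε := hN₂ k hkN₂
    have s3 : ∑ j ∈ Finset.range M, (if j < k then 4*ε^(k-j) else 0) ≤ 8*ε := by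
      rw [← Finset.sum_filter]
      have e2 : (Finset.range M).filter (· < k) = Finset.range k := by
        ext j
        simp only [Finset.mem_filter, Finset.mem_range]
        omega
      rw [e2, ← Finset.sum_range_reflect]
      have e3 : ∀ j ∈ Finset.range k, 4*ε^(k - (k-1-j)) = 4*ε^(j+1) := by
        intro j hj
        rw [Finset.mem_range] at hj
        rw [show k - (k-1-j) = j+1 by omega]
      rw [Finset.sum_congr rfl e3]
      exact hgeom k
    have s2 : ∑ j ∈ Finset.range M, (if k < j then 4*ε^(j-k) else 0) ≤ 8*ε := by
      rw [Finset.range_eq_Ico,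
        ← Finset.sum_Ico_consecutive _ (Nat.zero_le (k+1)) hMk]
      have e0 : ∑ j ∈ Finset.Ico 0 (k+1), (if k < j then 4*ε^(j-k) else 0) = 0 :=
        Finset.sum_eq_zero fun j hj => if_neg (by
          rw [Finset.mem_Ico] at hj; omega)
      rw [e0, zero_add, Finset.sum_Ico_eq_sum_range]
      have e1 : ∀ i ∈ Finset.range (M - (k+1)),
          (if k < k+1+i then 4*ε^(k+1+i-k) else 0) = 4*ε^(i+1) := by
        intro i _
        rw [if_pos (by omega), show k+1+i-k = i+1 by omega]
      rw [Finset.sum_congr rfl e1]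
      exact hgeom _
    calc ∑ j ∈ F, g j ≤ _ := step1
    _ ≤ _ := step2
    _ ≤ ε + 8*ε + 8*ε := add_le_add (add_le_add s1 s3) s2
    _ = 17 * ε := by ring
  obtain ⟨hlo, hhi⟩ := tprod_bounds f g (17*ε) hf0 hf1 hg0 hfg hSum
  rw [Real.dist_eq, abs_lt]
  constructor <;> linarith
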